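/- For every viscosity μ > 0 and every fixed r₀ = (x₀, y₀, z₀) ∈ ℝ³ with z₀ > 0, each column of the Blake tensor is divergence-free in the first variable: for every j ∈ {1,2,3}, the vector field r ↦ (K⁰_{1j}(r, r₀), K⁰_{2j}(r, r₀), K⁰_{3j}(r, r₀)) satisfies Σ_{i=1}^{3} ∂_{r_i} K⁰_{ij}(r, r₀) = 0 for all r ∈ ℝ³ \ {r₀, r̃₀}. -/

import Mathlib

/-!
Blake tensor for the Stokes Green function in a half-space.
Points of ℝ³ are represented as `Fin 3 → ℝ`, and `nrm` is the Euclidean norm.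
-/

/-- Euclidean norm on `Fin 3 → ℝ`. -/
noncomputable def nrm (r : Fin 3 → ℝ) : ℝ := Real.sqrt (∑ i, r i ^ 2)

/-- The Stokeslet `G(r) = (1/(8πμ))(Id/|r| + r⊗r/|r|³)`. -/
noncomputable def stokeslet (μ : ℝ) (r : Fin 3 → ℝ) : Fin 3 → Fin 3 → ℝ :=
  fun i j => (1 / (8 * Real.pi * μ)) *
    ((if i = j then (1 : ℝ) else 0) / nrm r + r i * r j / nrm r ^ 3)

/-- The image point `r̃₀ = (x₀, y₀, −z₀)` of `r₀ = (x₀, y₀, z₀)`. -/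
def mirror (r₀ : Fin 3 → ℝ) : Fin 3 → ℝ := ![r₀ 0, r₀ 1, -r₀ 2]

/-- First image kernel `K₁(r, r₀) = −(1/(8πμ))(Id/|r'| + r'⊗r'/|r'|³)`, `r' = r − r̃₀`. -/
noncomputable def K1 (μ : ℝ) (r r₀ : Fin 3 → ℝ) : Fin 3 → Fin 3 → ℝ :=
  fun i j => -(1 / (8 * Real.pi * μ)) *
    ((if i = j then (1 : ℝ) else 0) / nrm (r - mirror r₀)
      + (r - mirror r₀) i * (r - mirror r₀) j / nrm (r - mirror r₀) ^ 3)

/-- Second image kernel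
`K₂(r, r₀)_{ij} = (1/(4πμ)) z₀² (1 − 2δ_{j3})(δ_{ij}/|r'|³ − 3 r'_i r'_j/|r'|⁵)`. -/
noncomputable def K2 (μ : ℝ) (r r₀ : Fin 3 → ℝ) : Fin 3 → Fin 3 → ℝ :=
  fun i j => (1 / (4 * Real.pi * μ)) * (r₀ 2) ^ 2 *
    (1 - 2 * (if j = 2 then (1 : ℝ) else 0)) *
    ((if i = j then (1 : ℝ) else 0) / nrm (r - mirror r₀) ^ 3
      - 3 * (r - mirror r₀) i * (r - mirror r₀) j / nrm (r - mirror r₀) ^ 5)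

/-- Third image kernel
`K₃(r, r₀)_{ij} = −(1/(4πμ)) z₀ (1 − 2δ_{j3})(r'₃ δ_{ij}/|r'|³ − r'_j δ_{i3}/|r'|³
+ r'_i δ_{j3}/|r'|³ − 3 r'_i r'_j r'₃/|r'|⁵)`. -/
noncomputable def K3 (μ : ℝ) (r r₀ : Fin 3 → ℝ) : Fin 3 → Fin 3 → ℝ :=
  fun i j => -(1 / (4 * Real.pi * μ)) * (r₀ 2) *
    (1 - 2 * (if j = 2 then (1 : ℝ) else 0)) *
    ((r - mirror r₀) 2 * (if i = j then (1 : ℝ) else 0) / nrm (r - mirror r₀) ^ 3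
      - (r - mirror r₀) j * (if i = 2 then (1 : ℝ) else 0) / nrm (r - mirror r₀) ^ 3
      + (r - mirror r₀) i * (if j = 2 then (1 : ℝ) else 0) / nrm (r - mirror r₀) ^ 3
      - 3 * (r - mirror r₀) i * (r - mirror r₀) j * (r - mirror r₀) 2 / nrm (r - mirror r₀) ^ 5)

/-- The Blake tensor `K⁰(r, r₀) = G(r − r₀) + K₁(r, r₀) + K₂(r, r₀) + K₃(r, r₀)`. -/
noncomputable def blake (μ : ℝ) (r r₀ : Fin 3 → ℝ) : Fin 3 → Fin 3 → ℝ :=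
  fun i j => stokeslet μ (r - r₀) i j + K1 μ r r₀ i j + K2 μ r r₀ i j + K3 μ r r₀ i j

set_option maxHeartbeats 2000000

namespace BlakeAux

lemma nrm_eq (y : Fin 3 → ℝ) : nrm y = Real.sqrt (y 0 ^ 2 + y 1 ^ 2 + y 2 ^ 2) := by
  simp [nrm, Fin.sum_univ_three]

lemma nrm_pos {y : Fin 3 → ℝ} (h : y ≠ 0) : 0 < nrm y := by
  rw [nrm_eq]
  apply Real.sqrt_pos.2
  rcases eq_or_ne (y 0) 0 with h0 | h0
  · rcases eq_or_ne (y 1) 0 with h1 | h1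
    · rcases eq_or_ne (y 2) 0 with h2 | h2
      · exact absurd (funext fun i => by fin_cases i <;> assumption) h
      · positivity
    · positivity
  · positivity

lemma sq_nrm (y : Fin 3 → ℝ) : nrm y ^ 2 = y 0 ^ 2 + y 1 ^ 2 + y 2 ^ 2 := by
  rw [nrm_eq]; exact Real.sq_sqrt (by positivity)

section
variable {c r : Fin 3 → ℝ}

lemma nrm_ne (hc : r ≠ c) : nrm (r - c) ≠ 0 := (nrm_pos (sub_ne_zero.2 hc)).ne'

lemma pd_core (hc : r ≠ c) : ∃ L : (Fin 3 → ℝ) →L[ℝ] ℝ,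
    HasFDerivAt (fun y => nrm (y - c)) L r ∧
    ∀ t, L (Pi.single t 1) = (r - c) t / nrm (r - c) := by
  have h1 : ∀ a : Fin 3, HasFDerivAt (fun y : Fin 3 → ℝ => y a - c a)
      (ContinuousLinearMap.proj a : (Fin 3 → ℝ) →L[ℝ] ℝ) r := fun a =>
    (ContinuousLinearMap.proj a : (Fin 3 → ℝ) →L[ℝ] ℝ).hasFDerivAt.sub_const (c a)
  have hq : ∀ a : Fin 3, HasFDerivAt (fun y : Fin 3 → ℝ => (y a - c a) ^ 2)
      ((r a - c a) • (ContinuousLinearMap.proj a : (Fin 3 → ℝ) →L[ℝ] ℝ)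
        + (r a - c a) • (ContinuousLinearMap.proj a : (Fin 3 → ℝ) →L[ℝ] ℝ)) r := by
    intro a
    have he : (fun y : Fin 3 → ℝ => (y a - c a) ^ 2)
        = fun y : Fin 3 → ℝ => (y a - c a) * (y a - c a) := by
      funext y; ring
    rw [he]; exact (h1 a).mul (h1 a)
  have hQ : HasFDerivAt
      (fun y : Fin 3 → ℝ => (y 0 - c 0) ^ 2 + (y 1 - c 1) ^ 2 + (y 2 - c 2) ^ 2)
      (_ + _ + _) r := ((hq 0).add (hq 1)).add (hq 2)
  have hQ0 : (r 0 - c 0) ^ 2 + (r 1 - c 1) ^ 2 + (r 2 - c 2) ^ 2 ≠ 0 := by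
    have := nrm_ne hc
    rw [nrm_eq] at this
    simp only [Pi.sub_apply] at this
    intro h; exact this (by rw [h, Real.sqrt_zero])
  have H := hQ.sqrt hQ0
  have Hfun : (fun y : Fin 3 → ℝ =>
      Real.sqrt ((y 0 - c 0) ^ 2 + (y 1 - c 1) ^ 2 + (y 2 - c 2) ^ 2))
      = fun y => nrm (y - c) := by
    funext y; rw [nrm_eq]; simp [Pi.sub_apply]
  rw [Hfun] at H
  refine ⟨_, H, ?_⟩
  intro t
  rw [nrm_eq]
  simp only [ContinuousLinearMap.smul_apply, ContinuousLinearMap.add_apply,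
    ContinuousLinearMap.proj_apply, Pi.single_apply, Pi.sub_apply, smul_eq_mul]
  have hs : Real.sqrt ((r 0 - c 0) ^ 2 + (r 1 - c 1) ^ 2 + (r 2 - c 2) ^ 2) ≠ 0 := by
    have := nrm_ne hc; rw [nrm_eq] at this; simpa using this
  fin_cases t <;> simp <;> ring

end

/-- Directional derivative of a Stokeslet-type matrix entry. -/
noncomputable def eSt (A : ℝ) (w : Fin 3 → ℝ) (n : ℝ) (i j t : Fin 3) : ℝ :=
  A * (-((if i = j then (1:ℝ) else 0) * w t) / n ^ 3
    + ((if i = t then (1:ℝ) else 0) * w j + w i * (if j = t then (1:ℝ) else 0)) / n ^ 3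
    - 3 * w i * w j * w t / n ^ 5)

/-- Directional derivative of a `K2`-type matrix entry. -/
noncomputable def eD2 (A : ℝ) (w : Fin 3 → ℝ) (n : ℝ) (i j t : Fin 3) : ℝ :=
  A * (-(3 * (if i = j then (1:ℝ) else 0) * w t) / n ^ 5
    - 3 * (((if i = t then (1:ℝ) else 0) * w j + w i * (if j = t then (1:ℝ) else 0)) / n ^ 5
      - 5 * w i * w j * w t / n ^ 7))

/-- Directional derivative of a `K3`-type matrix entry. -/
noncomputable def eD3 (A : ℝ) (w : Fin 3 → ℝ) (n : ℝ) (i j t : Fin 3) : ℝ :=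
  A * ((if i = j then (1:ℝ) else 0) *
        ((if (2 : Fin 3) = t then (1:ℝ) else 0) / n ^ 3 - 3 * w 2 * w t / n ^ 5)
    - (if i = 2 then (1:ℝ) else 0) *
        ((if j = t then (1:ℝ) else 0) / n ^ 3 - 3 * w j * w t / n ^ 5)
    + (if j = 2 then (1:ℝ) else 0) *
        ((if i = t then (1:ℝ) else 0) / n ^ 3 - 3 * w i * w t / n ^ 5)
    - 3 * (((if i = t then (1:ℝ) else 0) * w j * w 2
        + w i * (if j = t then (1:ℝ) else 0) * w 2
        + w i * w j * (if (2 : Fin 3) = t then (1:ℝ) else 0)) / n ^ 5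
      - 5 * w i * w j * w 2 * w t / n ^ 7))

lemma pd_stok (A : ℝ) {c r : Fin 3 → ℝ} (hc : r ≠ c) (i j : Fin 3) :
    ∃ L : (Fin 3 → ℝ) →L[ℝ] ℝ,
      HasFDerivAt (fun y : Fin 3 → ℝ => A * ((if i = j then (1:ℝ) else 0) / nrm (y - c)
        + (y - c) i * (y - c) j / nrm (y - c) ^ 3)) L r ∧
      ∀ t, L (Pi.single t 1) = eSt A (r - c) (nrm (r - c)) i j t := by
  obtain ⟨LN, hLN, eN⟩ := pd_core hc
  have hn := nrm_ne hc
  have hw : ∀ a : Fin 3, HasFDerivAt (fun y : Fin 3 → ℝ => (y - c) a)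
      (ContinuousLinearMap.proj a : (Fin 3 → ℝ) →L[ℝ] ℝ) r := fun a =>
    (ContinuousLinearMap.proj a : (Fin 3 → ℝ) →L[ℝ] ℝ).hasFDerivAt.sub_const (c a)
  have h1 := (hasDerivAt_inv hn).comp_hasFDerivAt r hLN
  have h3 := (hasDerivAt_inv (mul_ne_zero (mul_ne_zero hn hn) hn)).comp_hasFDerivAt r
    ((hLN.mul hLN).mul hLN)
  have T1 := h1.const_mul (A * (if i = j then (1:ℝ) else 0))
  have T2 := (((hw i).mul (hw j)).mul h3).const_mul A
  have H0 := T1.add T2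
  have H := H0.congr_of_eventuallyEq (Filter.Eventually.of_forall (fun y => by
    show A * ((if i = j then (1:ℝ) else 0) / nrm (y - c)
      + (y - c) i * (y - c) j / nrm (y - c) ^ 3) = _
    simp only [Function.comp_apply, Pi.add_apply, Pi.sub_apply, Pi.mul_apply, Pi.pow_apply]
    ring))
  refine ⟨_, H, fun t => ?_⟩
  simp only [ContinuousLinearMap.add_apply, ContinuousLinearMap.sub_apply,
    ContinuousLinearMap.smul_apply, ContinuousLinearMap.proj_apply,
    Pi.single_apply, smul_eq_mul, eN, Function.comp_apply, eSt, eD2, eD3,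
    Pi.add_apply, Pi.sub_apply, Pi.mul_apply, Pi.pow_apply]
  generalize (if i = j then (1:ℝ) else 0) = dij
  generalize (if i = t then (1:ℝ) else 0) = dit
  generalize (if j = t then (1:ℝ) else 0) = djt
  field_simp
  ring

lemma pd_K2core (A : ℝ) {c r : Fin 3 → ℝ} (hc : r ≠ c) (i j : Fin 3) :
    ∃ L : (Fin 3 → ℝ) →L[ℝ] ℝ,
      HasFDerivAt (fun y : Fin 3 → ℝ => A * ((if i = j then (1:ℝ) else 0) / nrm (y - c) ^ 3
        - 3 * (y - c) i * (y - c) j / nrm (y - c) ^ 5)) L r ∧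
      ∀ t, L (Pi.single t 1) = eD2 A (r - c) (nrm (r - c)) i j t := by
  obtain ⟨LN, hLN, eN⟩ := pd_core hc
  have hn := nrm_ne hc
  have hw : ∀ a : Fin 3, HasFDerivAt (fun y : Fin 3 → ℝ => (y - c) a)
      (ContinuousLinearMap.proj a : (Fin 3 → ℝ) →L[ℝ] ℝ) r := fun a =>
    (ContinuousLinearMap.proj a : (Fin 3 → ℝ) →L[ℝ] ℝ).hasFDerivAt.sub_const (c a)
  have h3 := (hasDerivAt_inv (mul_ne_zero (mul_ne_zero hn hn) hn)).comp_hasFDerivAt r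
    ((hLN.mul hLN).mul hLN)
  have h5 := (hasDerivAt_inv
      (mul_ne_zero (mul_ne_zero (mul_ne_zero (mul_ne_zero hn hn) hn) hn) hn)).comp_hasFDerivAt r
    ((((hLN.mul hLN).mul hLN).mul hLN).mul hLN)
  have T1 := h3.const_mul (A * (if i = j then (1:ℝ) else 0))
  have T2 := (((hw i).mul (hw j)).mul h5).const_mul (A * 3)
  have H0 := T1.sub T2
  have H := H0.congr_of_eventuallyEq (Filter.Eventually.of_forall (fun y => by
    show A * ((if i = j then (1:ℝ) else 0) / nrm (y - c) ^ 3
      - 3 * (y - c) i * (y - c) j / nrm (y - c) ^ 5) = _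
    simp only [Function.comp_apply, Pi.add_apply, Pi.sub_apply, Pi.mul_apply, Pi.pow_apply]
    ring))
  refine ⟨_, H, fun t => ?_⟩
  simp only [ContinuousLinearMap.add_apply, ContinuousLinearMap.sub_apply,
    ContinuousLinearMap.smul_apply, ContinuousLinearMap.proj_apply,
    Pi.single_apply, smul_eq_mul, eN, Function.comp_apply, eSt, eD2, eD3,
    Pi.add_apply, Pi.sub_apply, Pi.mul_apply, Pi.pow_apply]
  generalize (if i = j then (1:ℝ) else 0) = dij
  generalize (if i = t then (1:ℝ) else 0) = dit
  generalize (if j = t then (1:ℝ) else 0) = djt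
  field_simp
  ring

lemma pd_K3core (A : ℝ) {c r : Fin 3 → ℝ} (hc : r ≠ c) (i j : Fin 3) :
    ∃ L : (Fin 3 → ℝ) →L[ℝ] ℝ,
      HasFDerivAt (fun y : Fin 3 → ℝ => A * ((y - c) 2 * (if i = j then (1:ℝ) else 0) / nrm (y - c) ^ 3
        - (y - c) j * (if i = 2 then (1:ℝ) else 0) / nrm (y - c) ^ 3
        + (y - c) i * (if j = 2 then (1:ℝ) else 0) / nrm (y - c) ^ 3
        - 3 * (y - c) i * (y - c) j * (y - c) 2 / nrm (y - c) ^ 5)) L r ∧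
      ∀ t, L (Pi.single t 1) = eD3 A (r - c) (nrm (r - c)) i j t := by
  obtain ⟨LN, hLN, eN⟩ := pd_core hc
  have hn := nrm_ne hc
  have hw : ∀ a : Fin 3, HasFDerivAt (fun y : Fin 3 → ℝ => (y - c) a)
      (ContinuousLinearMap.proj a : (Fin 3 → ℝ) →L[ℝ] ℝ) r := fun a =>
    (ContinuousLinearMap.proj a : (Fin 3 → ℝ) →L[ℝ] ℝ).hasFDerivAt.sub_const (c a)
  have h3 := (hasDerivAt_inv (mul_ne_zero (mul_ne_zero hn hn) hn)).comp_hasFDerivAt r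
    ((hLN.mul hLN).mul hLN)
  have h5 := (hasDerivAt_inv
      (mul_ne_zero (mul_ne_zero (mul_ne_zero (mul_ne_zero hn hn) hn) hn) hn)).comp_hasFDerivAt r
    ((((hLN.mul hLN).mul hLN).mul hLN).mul hLN)
  have T1 := ((hw 2).mul h3).const_mul (A * (if i = j then (1:ℝ) else 0))
  have T2 := ((hw j).mul h3).const_mul (A * (if i = 2 then (1:ℝ) else 0))
  have T3 := ((hw i).mul h3).const_mul (A * (if j = 2 then (1:ℝ) else 0))
  have T4 := ((((hw i).mul (hw j)).mul (hw 2)).mul h5).const_mul (A * 3)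
  have H0 := ((T1.sub T2).add T3).sub T4
  have H := H0.congr_of_eventuallyEq (Filter.Eventually.of_forall (fun y => by
    show A * ((y - c) 2 * (if i = j then (1:ℝ) else 0) / nrm (y - c) ^ 3
      - (y - c) j * (if i = 2 then (1:ℝ) else 0) / nrm (y - c) ^ 3
      + (y - c) i * (if j = 2 then (1:ℝ) else 0) / nrm (y - c) ^ 3
      - 3 * (y - c) i * (y - c) j * (y - c) 2 / nrm (y - c) ^ 5) = _
    simp only [Function.comp_apply, Pi.add_apply, Pi.sub_apply, Pi.mul_apply, Pi.pow_apply]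
    ring))
  refine ⟨_, H, fun t => ?_⟩
  simp only [ContinuousLinearMap.add_apply, ContinuousLinearMap.sub_apply,
    ContinuousLinearMap.smul_apply, ContinuousLinearMap.proj_apply,
    Pi.single_apply, smul_eq_mul, eN, Function.comp_apply, eSt, eD2, eD3,
    Pi.add_apply, Pi.sub_apply, Pi.mul_apply, Pi.pow_apply]
  generalize (if i = j then (1:ℝ) else 0) = dij
  generalize (if i = 2 then (1:ℝ) else 0) = di2
  generalize (if j = 2 then (1:ℝ) else 0) = dj2
  generalize (if i = t then (1:ℝ) else 0) = dit
  generalize (if j = t then (1:ℝ) else 0) = djt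
  generalize (if (2 : Fin 3) = t then (1:ℝ) else 0) = d2t
  field_simp
  ring

lemma div_stok (A : ℝ) (w : Fin 3 → ℝ) (n : ℝ) (hn : n ≠ 0)
    (h2 : n ^ 2 = w 0 ^ 2 + w 1 ^ 2 + w 2 ^ 2) (j : Fin 3) :
    eSt A w n 0 j 0 + eSt A w n 1 j 1 + eSt A w n 2 j 2 = 0 := by
  have hU : w 0 ^ 2 + w 1 ^ 2 + w 2 ^ 2 ≠ 0 := by rw [← h2]; exact pow_ne_zero 2 hn
  have h3 : n ^ 3 = (w 0 ^ 2 + w 1 ^ 2 + w 2 ^ 2) * n := by rw [← h2]; ring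
  have h5 : n ^ 5 = (w 0 ^ 2 + w 1 ^ 2 + w 2 ^ 2) ^ 2 * n := by rw [← h2]; ring
  simp only [eSt]
  rw [h3, h5]
  fin_cases j <;>
    · try simp only [Fin.reduceFinMk]
      norm_num [Fin.ext_iff]
      field_simp
      ring

lemma div_D2 (A : ℝ) (w : Fin 3 → ℝ) (n : ℝ) (hn : n ≠ 0)
    (h2 : n ^ 2 = w 0 ^ 2 + w 1 ^ 2 + w 2 ^ 2) (j : Fin 3) :
    eD2 A w n 0 j 0 + eD2 A w n 1 j 1 + eD2 A w n 2 j 2 = 0 := by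
  have hU : w 0 ^ 2 + w 1 ^ 2 + w 2 ^ 2 ≠ 0 := by rw [← h2]; exact pow_ne_zero 2 hn
  have h5 : n ^ 5 = (w 0 ^ 2 + w 1 ^ 2 + w 2 ^ 2) ^ 2 * n := by rw [← h2]; ring
  have h7 : n ^ 7 = (w 0 ^ 2 + w 1 ^ 2 + w 2 ^ 2) ^ 3 * n := by rw [← h2]; ring
  simp only [eD2]
  rw [h5, h7]
  fin_cases j <;>
    · try simp only [Fin.reduceFinMk]
      norm_num [Fin.ext_iff]
      field_simp
      ring

lemma div_D3 (A : ℝ) (w : Fin 3 → ℝ) (n : ℝ) (hn : n ≠ 0)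
    (h2 : n ^ 2 = w 0 ^ 2 + w 1 ^ 2 + w 2 ^ 2) (j : Fin 3) :
    eD3 A w n 0 j 0 + eD3 A w n 1 j 1 + eD3 A w n 2 j 2 = 0 := by
  have hU : w 0 ^ 2 + w 1 ^ 2 + w 2 ^ 2 ≠ 0 := by rw [← h2]; exact pow_ne_zero 2 hn
  have h3 : n ^ 3 = (w 0 ^ 2 + w 1 ^ 2 + w 2 ^ 2) * n := by rw [← h2]; ring
  have h5 : n ^ 5 = (w 0 ^ 2 + w 1 ^ 2 + w 2 ^ 2) ^ 2 * n := by rw [← h2]; ring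
  have h7 : n ^ 7 = (w 0 ^ 2 + w 1 ^ 2 + w 2 ^ 2) ^ 3 * n := by rw [← h2]; ring
  simp only [eD3]
  rw [h3, h5, h7]
  fin_cases j <;>
    · try simp only [Fin.reduceFinMk]
      norm_num [Fin.ext_iff]
      field_simp
      ring

end BlakeAux

/-- Each column of the Blake tensor is divergence-free in the first variable:
for `μ > 0`, `r₀` with `z₀ > 0`, and every `j`,
`Σ_{i=1}^{3} ∂_{r_i} K⁰_{ij}(r, r₀) = 0` for all `r ∈ ℝ³ \ {r₀, r̃₀}`. -/
theorem blake_tensor_divergence_free (μ : ℝ) (hμ : 0 < μ)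
    (r₀ : Fin 3 → ℝ) (hz₀ : 0 < r₀ 2)
    (j : Fin 3) (r : Fin 3 → ℝ) (h₁ : r ≠ r₀) (h₂ : r ≠ mirror r₀) :
    ∑ i : Fin 3, fderiv ℝ (fun y : Fin 3 → ℝ => blake μ y r₀ i j) r (Pi.single i 1) = 0 := by
  have hm := BlakeAux.nrm_ne h₁
  have hp := BlakeAux.nrm_ne h₂
  have key : ∀ i t : Fin 3, fderiv ℝ (fun y : Fin 3 → ℝ => blake μ y r₀ i j) r (Pi.single t 1)
      = BlakeAux.eSt (1 / (8 * Real.pi * μ)) (r - r₀) (nrm (r - r₀)) i j t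
      + BlakeAux.eSt (-(1 / (8 * Real.pi * μ))) (r - mirror r₀) (nrm (r - mirror r₀)) i j t
      + BlakeAux.eD2 (1 / (4 * Real.pi * μ) * (r₀ 2) ^ 2
            * (1 - 2 * (if j = 2 then (1:ℝ) else 0)))
          (r - mirror r₀) (nrm (r - mirror r₀)) i j t
      + BlakeAux.eD3 (-(1 / (4 * Real.pi * μ)) * (r₀ 2)
            * (1 - 2 * (if j = 2 then (1:ℝ) else 0)))
          (r - mirror r₀) (nrm (r - mirror r₀)) i j t := by
    intro i t
    obtain ⟨L1, hL1, e1⟩ := BlakeAux.pd_stok (1 / (8 * Real.pi * μ)) h₁ i j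
    obtain ⟨L2, hL2, e2⟩ := BlakeAux.pd_stok (-(1 / (8 * Real.pi * μ))) h₂ i j
    obtain ⟨L3, hL3, e3⟩ := BlakeAux.pd_K2core (1 / (4 * Real.pi * μ) * (r₀ 2) ^ 2
      * (1 - 2 * (if j = 2 then (1:ℝ) else 0))) h₂ i j
    obtain ⟨L4, hL4, e4⟩ := BlakeAux.pd_K3core (-(1 / (4 * Real.pi * μ)) * (r₀ 2)
      * (1 - 2 * (if j = 2 then (1:ℝ) else 0))) h₂ i j
    have H0 := ((hL1.add hL2).add hL3).add hL4
    have H := H0.congr_of_eventuallyEq (Filter.Eventually.of_forall (fun y => by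
      show blake μ y r₀ i j = _
      simp only [blake, stokeslet, K1, K2, K3, Pi.add_apply]
      try ring))
    rw [H.fderiv]
    simp only [ContinuousLinearMap.add_apply, e1, e2, e3, e4]
  rw [Fin.sum_univ_three, key 0 0, key 1 1, key 2 2]
  have d1 := BlakeAux.div_stok (1 / (8 * Real.pi * μ)) (r - r₀) (nrm (r - r₀)) hm
    (BlakeAux.sq_nrm (r - r₀)) j
  have d2 := BlakeAux.div_stok (-(1 / (8 * Real.pi * μ))) (r - mirror r₀) (nrm (r - mirror r₀))
    hp (BlakeAux.sq_nrm (r - mirror r₀)) j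
  have d3 := BlakeAux.div_D2 (1 / (4 * Real.pi * μ) * (r₀ 2) ^ 2
      * (1 - 2 * (if j = 2 then (1:ℝ) else 0))) (r - mirror r₀) (nrm (r - mirror r₀))
    hp (BlakeAux.sq_nrm (r - mirror r₀)) j
  have d4 := BlakeAux.div_D3 (-(1 / (4 * Real.pi * μ)) * (r₀ 2)
      * (1 - 2 * (if j = 2 then (1:ℝ) else 0))) (r - mirror r₀) (nrm (r - mirror r₀))
    hp (BlakeAux.sq_nrm (r - mirror r₀)) j
  linarith [d1, d2, d3, d4]
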